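/- Let G be a countable group, (Γ_n) a decreasing sequence of finite-index normal subgroups of G, and x : G → {0,1} an array relative to (Γ_n), i.e. G = ⋃_n Per(x,Γ_n). For each n choose a fundamental domain E_n of G/Γ_n and set D(x,Γ_n) = #(E_n ∩ Per(x,Γ_n))/#E_n (this value is independent of the choice of E_n). Then the sequence (D(x,Γ_n)) is nondecreasing, its limit L exists, and L equals the regularity constant 𝒟(x) = sup{#(E ∩ Per(x,Γ))/#E : Γ a finite-index subgroup of G, E a fundamental domain of G/Γ}. -/

import Mathlib

open MeasureTheory Filter Set Topology
open scoped symmDiff ENNReal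

/-- Extended logarithm of an `ℝ≥0∞` value, with `eLog 0 = ⊥` and `eLog ⊤ = ⊤`. -/
noncomputable def eLog (x : ℝ≥0∞) : EReal :=
  if x = 0 then ⊥ else if x = ⊤ then ⊤ else ((Real.log x.toReal : ℝ) : EReal)

/-- Maximal cardinality (in `ℝ≥0∞`) of an `ε`-separated subset of `S` w.r.t. `d`. -/
noncomputable def sepCount {Z : Type*} (S : Set Z) (d : Z → Z → ℝ) (ε : ℝ) : ℝ≥0∞ :=
  ⨆ (A : Finset Z) (_ : ↑A ⊆ S ∧ (A : Set Z).Pairwise fun z z' => ε ≤ d z z'), (A.card : ℝ≥0∞)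

/-- The quantity `log Sep(S, d, ε) / (- log ε)`, as an extended real. -/
noncomputable def acRatio {Z : Type*} (S : Set Z) (d : Z → Z → ℝ) (ε : ℝ) : EReal :=
  eLog (sepCount S d ε) * (((-Real.log ε)⁻¹ : ℝ) : EReal)

open Classical in
/-- `F` is a left Følner sequence in the group `G`. -/
def IsFolner {G : Type*} [Group G] (F : ℕ → Finset G) : Prop :=
  (∀ n, (F n).Nonempty) ∧ ∀ g : G,
    Filter.Tendsto
      (fun n => ((((F n).image fun h => g * h) ∆ F n).card : ℝ) / ((F n).card : ℝ))
      Filter.atTop (nhds 0)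

/-- The Besicovitch pseudometric w.r.t. the sequence `F`. -/
noncomputable def besicovitchDist {G : Type*} (F : ℕ → Finset G) (x y : G → Bool) : ℝ :=
  Filter.limsup (fun n => (((F n).filter fun g => x g ≠ y g).card : ℝ) / ((F n).card : ℝ))
    Filter.atTop

open Classical in
/-- The symbolic model set (as a 0-1 array) associated to a window `W ⊆ H`. -/
noncomputable def modelSet {G H : Type*} (τ : G → H) (W : Set H) : G → Bool :=
  fun g => decide (τ g ∈ W)

/-- Orbit closure of `x` under the left shift `(g·x)(h) = x(hg)`, in the product topology. -/
def shiftOrbitClosure {G : Type*} [Group G] (x : G → Bool) : Set (G → Bool) :=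
  closure { y : G → Bool | ∃ g : G, y = fun h => x (h * g) }

/-- `Per(x, Γ, α)`, the set of `Γ`-periodic positions of `x` with value `α`. -/
def perA {G : Type*} [Group G] (x : G → Bool) (Γ : Subgroup G) (α : Bool) : Set G :=
  { g : G | ∀ γ ∈ Γ, x (g * γ) = α }

/-- `Per(x, Γ) = Per(x,Γ,0) ∪ Per(x,Γ,1)`. -/
def perSet {G : Type*} [Group G] (x : G → Bool) (Γ : Subgroup G) : Set G :=
  perA x Γ false ∪ perA x Γ true

/-- `E` is a fundamental domain of `G/Γ`: `g ↦ gΓ` is a bijection from `E` onto `G/Γ`. -/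
def IsFundDom {G : Type*} [Group G] (Γ : Subgroup G) (E : Finset G) : Prop :=
  ∀ g : G, ∃! d, d ∈ E ∧ g⁻¹ * d ∈ Γ

/-- The density `D(x,Γ)` of `Per(x,Γ)` computed in a fundamental domain `E`. -/
noncomputable def perDensity {G : Type*} [Group G] (x : G → Bool) (Γ : Subgroup G)
    (E : Finset G) : ℝ :=
  (((E : Set G) ∩ perSet x Γ).ncard : ℝ) / (E.card : ℝ)

/-- The regularity constant `𝒟(x)`. -/
noncomputable def regConst {G : Type*} [Group G] (x : G → Bool) : ℝ :=
  sSup { r : ℝ | ∃ (Γ : Subgroup G) (E : Finset G),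
    Γ.FiniteIndex ∧ IsFundDom Γ E ∧ r = perDensity x Γ E }

section Stmt7Aux

variable {G : Type*} [Group G]

open QuotientGroup Pointwise

lemma perA_anti (x : G → Bool) {Γ' Γ : Subgroup G} (h : Γ' ≤ Γ) (α : Bool) :
    perA x Γ α ⊆ perA x Γ' α := fun _ hg γ hγ => hg γ (h hγ)

lemma perSet_anti (x : G → Bool) {Γ' Γ : Subgroup G} (h : Γ' ≤ Γ) :
    perSet x Γ ⊆ perSet x Γ' := by
  rintro g (h' | h')
  · exact Or.inl (perA_anti x h _ h')
  · exact Or.inr (perA_anti x h _ h')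

lemma mem_perSet {x : G → Bool} {Γ : Subgroup G} {g : G} :
    g ∈ perSet x Γ ↔ ∃ α, g ∈ perA x Γ α := by
  constructor
  · rintro (h | h)
    exacts [⟨false, h⟩, ⟨true, h⟩]
  · rintro ⟨α, h⟩
    cases α
    exacts [Or.inl h, Or.inr h]

lemma perA_mul {x : G → Bool} {Γ : Subgroup G} {α : Bool} {g : G}
    (hg : g ∈ perA x Γ α) {γ : G} (hγ : γ ∈ Γ) : g * γ ∈ perA x Γ α := by
  intro γ' hγ'
  rw [mul_assoc]
  exact hg _ (mul_mem hγ hγ')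

lemma perSet_mul {x : G → Bool} {Γ : Subgroup G} {g : G}
    (hg : g ∈ perSet x Γ) {γ : G} (hγ : γ ∈ Γ) : g * γ ∈ perSet x Γ := by
  rcases mem_perSet.mp hg with ⟨α, h⟩
  exact mem_perSet.mpr ⟨α, perA_mul h hγ⟩

/-- The natural projection between coset spaces for nested subgroups. -/
def qmap (Γ' Γ : Subgroup G) (h : Γ' ≤ Γ) : G ⧸ Γ' → G ⧸ Γ :=
  Quotient.map' id fun _ _ hab => leftRel_apply.mpr (h (leftRel_apply.mp hab))

lemma qmap_mk {Γ' Γ : Subgroup G} (h : Γ' ≤ Γ) (g : G) :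
    qmap Γ' Γ h (g : G ⧸ Γ') = (g : G ⧸ Γ) := rfl

lemma fst_quotientEquivProdOfLE {Γ' Γ : Subgroup G} (h : Γ' ≤ Γ) (z : G ⧸ Γ') :
    (Subgroup.quotientEquivProdOfLE h z).1 = qmap Γ' Γ h z := by
  induction z using Quotient.inductionOn' with
  | h g => rfl

lemma ncard_preimage_qmap {Γ' Γ : Subgroup G} (h : Γ' ≤ Γ) (A : Set (G ⧸ Γ)) :
    (qmap Γ' Γ h ⁻¹' A).ncard = A.ncard * Nat.card (Γ ⧸ Γ'.subgroupOf Γ) := by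
  have he : qmap Γ' Γ h ⁻¹' A =
      (Subgroup.quotientEquivProdOfLE h) ⁻¹' (A ×ˢ (Set.univ : Set (Γ ⧸ Γ'.subgroupOf Γ))) := by
    ext z
    simp only [Set.mem_preimage, Set.mem_prod, Set.mem_univ, and_true,
      fst_quotientEquivProdOfLE h z]
  rw [he, ← Equiv.image_symm_eq_preimage,
    Set.ncard_image_of_injective _ (Subgroup.quotientEquivProdOfLE h).symm.injective,
    ← Nat.card_coe_set_eq, Nat.card_congr (Equiv.Set.prod _ _), Nat.card_prod,
    Nat.card_coe_set_eq, Nat.card_coe_set_eq, Set.ncard_univ]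

lemma preimage_qmap_image {Γ' Γ : Subgroup G} (h : Γ' ≤ Γ) {S : Set G}
    (hS : ∀ g ∈ S, ∀ γ ∈ Γ, g * γ ∈ S) :
    qmap Γ' Γ h ⁻¹' (QuotientGroup.mk '' S) = (QuotientGroup.mk '' S : Set (G ⧸ Γ')) := by
  ext z
  induction z using Quotient.inductionOn' with
  | h g =>
    constructor
    · intro hz
      rw [Set.mem_preimage] at hz
      obtain ⟨p, hp, hpq⟩ := hz
      have hpg : p⁻¹ * g ∈ Γ := QuotientGroup.eq.mp hpq
      have : p * (p⁻¹ * g) ∈ S := hS p hp _ hpg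
      rw [mul_inv_cancel_left] at this
      exact ⟨g, this, rfl⟩
    · rintro ⟨p, hp, hpq⟩
      rw [Set.mem_preimage]
      have hpg : p⁻¹ * g ∈ Γ' := QuotientGroup.eq.mp hpq
      exact ⟨p, hp, QuotientGroup.eq.mpr (h hpg)⟩

lemma IsFundDom.injOn {Γ : Subgroup G} {E : Finset G} (hE : IsFundDom Γ E) :
    Set.InjOn (QuotientGroup.mk : G → G ⧸ Γ) ↑E := by
  intro d₁ h₁ d₂ h₂ h
  have hm : d₁⁻¹ * d₂ ∈ Γ := QuotientGroup.eq.mp h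
  exact (hE d₁).unique ⟨h₁, by simpa using one_mem Γ⟩ ⟨h₂, hm⟩

lemma IsFundDom.image_eq {Γ : Subgroup G} {E : Finset G} (hE : IsFundDom Γ E) :
    (QuotientGroup.mk : G → G ⧸ Γ) '' ↑E = Set.univ := by
  apply Set.eq_univ_of_forall
  intro c
  induction c using Quotient.inductionOn' with
  | h g =>
    obtain ⟨d, ⟨hdE, hd⟩, -⟩ := hE g
    exact ⟨d, hdE, (QuotientGroup.eq.mpr hd).symm⟩

lemma IsFundDom.finite_quotient {Γ : Subgroup G} {E : Finset G} (hE : IsFundDom Γ E) :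
    Finite (G ⧸ Γ) := by
  rw [← Set.finite_univ_iff, ← hE.image_eq]
  exact (E.finite_toSet).image _

lemma IsFundDom.ncard_inter {Γ : Subgroup G} {E : Finset G} (hE : IsFundDom Γ E)
    {S : Set G} (hS : ∀ g ∈ S, ∀ γ ∈ Γ, g * γ ∈ S) :
    ((E : Set G) ∩ S).ncard = (QuotientGroup.mk '' S : Set (G ⧸ Γ)).ncard := by
  have himg : QuotientGroup.mk '' ((E : Set G) ∩ S) = (QuotientGroup.mk '' S : Set (G ⧸ Γ)) := by
    apply Set.Subset.antisymm
    · exact Set.image_mono Set.inter_subset_right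
    · rintro c ⟨p, hp, rfl⟩
      obtain ⟨d, ⟨hdE, hd⟩, -⟩ := hE p
      refine ⟨d, ⟨hdE, ?_⟩, (QuotientGroup.eq.mpr hd).symm⟩
      have : p * (p⁻¹ * d) ∈ S := hS p hp _ hd
      simpa using this
  rw [← himg, Set.ncard_image_of_injOn (hE.injOn.mono Set.inter_subset_left)]

lemma IsFundDom.card_eq {Γ : Subgroup G} {E : Finset G} (hE : IsFundDom Γ E) :
    E.card = Nat.card (G ⧸ Γ) := by
  have := hE.ncard_inter (S := Set.univ) (by intro g _ γ _; trivial)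
  simpa [Set.ncard_univ, Set.ncard_coe_finset, Set.image_univ,
    Set.range_eq_univ.mpr Quotient.mk''_surjective] using this

lemma perDensity_eq_quot (x : G → Bool) {Γ : Subgroup G} {E : Finset G} (hE : IsFundDom Γ E) :
    perDensity x Γ E =
      ((QuotientGroup.mk '' perSet x Γ : Set (G ⧸ Γ)).ncard : ℝ) / (Nat.card (G ⧸ Γ) : ℝ) := by
  rw [perDensity, hE.ncard_inter (fun _ hg _ hγ => perSet_mul hg hγ), hE.card_eq]

lemma perDensity_le_one (x : G → Bool) {Γ : Subgroup G} {E : Finset G} (hE : IsFundDom Γ E) :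
    perDensity x Γ E ≤ 1 := by
  rw [perDensity]
  apply div_le_one_of_le₀
  · have : ((E : Set G) ∩ perSet x Γ).ncard ≤ (E : Set G).ncard :=
      Set.ncard_le_ncard Set.inter_subset_left E.finite_toSet
    rw [Set.ncard_coe_finset] at this
    exact_mod_cast this
  · positivity

lemma perDensity_mono (x : G → Bool) {Γ' Γ : Subgroup G} (h : Γ' ≤ Γ) {E E' : Finset G}
    (hE : IsFundDom Γ E) (hE' : IsFundDom Γ' E') :
    perDensity x Γ E ≤ perDensity x Γ' E' := by
  haveI := hE.finite_quotient
  haveI := hE'.finite_quotient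
  rw [perDensity_eq_quot x hE, perDensity_eq_quot x hE']
  set c := Nat.card (Γ ⧸ Γ'.subgroupOf Γ) with hc
  have hcard : Nat.card (G ⧸ Γ') = Nat.card (G ⧸ Γ) * c := by
    have h0 := ncard_preimage_qmap h (Set.univ)
    rwa [Set.preimage_univ, Set.ncard_univ, Set.ncard_univ] at h0
  have hsub : qmap Γ' Γ h ⁻¹' (QuotientGroup.mk '' perSet x Γ) ⊆
      (QuotientGroup.mk '' perSet x Γ' : Set (G ⧸ Γ')) := by
    rw [preimage_qmap_image h (fun _ hg _ hγ => perSet_mul hg hγ)]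
    exact Set.image_mono (perSet_anti x h)
  have hineq : (QuotientGroup.mk '' perSet x Γ : Set (G ⧸ Γ)).ncard * c ≤
      (QuotientGroup.mk '' perSet x Γ' : Set (G ⧸ Γ')).ncard := by
    rw [← ncard_preimage_qmap h]
    exact Set.ncard_le_ncard hsub (Set.toFinite _)
  have hNpos : 0 < Nat.card (G ⧸ Γ) := Nat.card_pos
  have hN'pos : 0 < Nat.card (G ⧸ Γ') := Nat.card_pos
  have hcpos : 0 < c := by
    rcases Nat.eq_zero_or_pos c with h0 | h0
    · rw [h0, mul_zero] at hcard; omega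
    · exact h0
  rw [div_le_div_iff₀ (by positivity) (by positivity)]
  have h1 : ((QuotientGroup.mk '' perSet x Γ : Set (G ⧸ Γ)).ncard : ℝ) * (Nat.card (G ⧸ Γ')) =
      (((QuotientGroup.mk '' perSet x Γ : Set (G ⧸ Γ)).ncard * c : ℕ) : ℝ) *
        (Nat.card (G ⧸ Γ)) := by
    rw [hcard]; push_cast; ring
  rw [h1]
  have h2 : (((QuotientGroup.mk '' perSet x Γ : Set (G ⧸ Γ)).ncard * c : ℕ) : ℝ) ≤
      ((QuotientGroup.mk '' perSet x Γ' : Set (G ⧸ Γ')).ncard : ℝ) := by exact_mod_cast hineq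
  exact mul_le_mul_of_nonneg_right h2 (by positivity)

lemma eventual_le {G : Type*} [Group G]
    (Γ : ℕ → Subgroup G) (hdec : ∀ n, Γ (n + 1) ≤ Γ n)
    (hnorm : ∀ n, (Γ n).Normal) (hfi : ∀ n, (Γ n).FiniteIndex)
    (x : G → Bool) (hrel : ∀ g : G, ∃ n, g ∈ perSet x (Γ n))
    (E : ℕ → Finset G) (hE : ∀ n, IsFundDom (Γ n) (E n))
    (Λ : Subgroup G) (hΛ : Λ.FiniteIndex) (F : Finset G) (hF : IsFundDom Λ F) :
    ∃ n₀, ∀ n, n₀ ≤ n → perDensity x Λ F ≤ perDensity x (Γ n) (E n) := by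
  haveI := hΛ
  have hchain : ∀ m n, n ≤ m → Γ m ≤ Γ n := by
    intro m n hnm
    induction hnm with
    | refl => exact le_rfl
    | step _ ih => exact (hdec _).trans ih
  have hfidx : ∀ n, (Λ ⊔ Γ n).index ≠ 0 := by
    intro n h0
    have hdvd : (Λ ⊔ Γ n).index ∣ Λ.index := Subgroup.index_dvd_of_le le_sup_left
    rw [h0] at hdvd
    exact hΛ.index_ne_zero (zero_dvd_iff.mp hdvd)
  have hbddI : ∀ n, (Λ ⊔ Γ n).index ≤ Λ.index := fun n =>
    Nat.le_of_dvd (Nat.pos_of_ne_zero hΛ.index_ne_zero) (Subgroup.index_dvd_of_le le_sup_left)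
  have hmono_idx : ∀ m n, n ≤ m → (Λ ⊔ Γ n).index ≤ (Λ ⊔ Γ m).index := by
    intro m n hnm
    exact Nat.le_of_dvd (Nat.pos_of_ne_zero (hfidx m))
      (Subgroup.index_dvd_of_le (sup_le_sup_left (hchain m n hnm) Λ))
  have hbddA : BddAbove (Set.range fun n => (Λ ⊔ Γ n).index) :=
    ⟨Λ.index, by rintro r ⟨n, rfl⟩; exact hbddI n⟩
  obtain ⟨n₀, hn₀⟩ : ∃ n₀, sSup (Set.range fun n => (Λ ⊔ Γ n).index) = (Λ ⊔ Γ n₀).index := by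
    obtain ⟨n₀, h⟩ := Nat.sSup_mem (s := Set.range fun n => (Λ ⊔ Γ n).index) ⟨_, ⟨0, rfl⟩⟩ hbddA
    exact ⟨n₀, h.symm⟩
  have hstab : ∀ n, n₀ ≤ n → Λ ⊔ Γ n = Λ ⊔ Γ n₀ := by
    intro n hn
    have h1 : Λ ⊔ Γ n ≤ Λ ⊔ Γ n₀ := sup_le_sup_left (hchain n n₀ hn) Λ
    have h2 : (Λ ⊔ Γ n₀).index = (Λ ⊔ Γ n).index := by
      apply le_antisymm (hmono_idx n n₀ hn)
      rw [← hn₀]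
      exact le_csSup hbddA ⟨n, rfl⟩
    have hmul := Subgroup.relIndex_mul_index h1
    rw [h2] at hmul
    have h3 : (Λ ⊔ Γ n).relIndex (Λ ⊔ Γ n₀) = 1 := by
      have := hfidx n
      nlinarith [Nat.pos_of_ne_zero (hfidx n)]
    exact le_antisymm h1 (Subgroup.relIndex_eq_one.mp h3)
  set H := Λ ⊔ Γ n₀ with hHdef
  haveI hHfi : H.FiniteIndex := ⟨hfidx n₀⟩
  have hΛH : Λ ≤ H := le_sup_left
  -- value propagation on H-cosets of periodic Λ-positions
  have hprop : ∀ (α : Bool) (g : G), g ∈ perA x Λ α → ∀ y ∈ H, x (g * y) = α := by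
    intro α g hg y hy
    obtain ⟨m₁, hm₁⟩ := hrel (g * y)
    set m := max m₁ n₀ with hmdef
    have hm : g * y ∈ perSet x (Γ m) := perSet_anti x (hchain _ _ (le_max_left _ _)) hm₁
    obtain ⟨β, hβ⟩ := mem_perSet.mp hm
    haveI := hnorm m
    have hyH : y ∈ Λ ⊔ Γ m := by rw [hstab m (le_max_right _ _)]; exact hy
    have hyS : (y : G) ∈ (↑Λ * ↑(Γ m) : Set G) := by
      rw [← Subgroup.mul_normal]; exact hyH
    obtain ⟨l, hl, γ, hγ, rfl⟩ := Set.mem_mul.mp hyS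
    have h1 : x (g * l) = α := hg l hl
    have h2 : x (g * l) = β := by
      have h3 := hβ γ⁻¹ (inv_mem hγ)
      have h4 : g * (l * γ) * γ⁻¹ = g * l := by group
      rwa [h4] at h3
    have h5 : x (g * (l * γ)) = β := by simpa using hβ 1 (one_mem _)
    rw [h5, ← h2, h1]
  have hper : ∀ n, n₀ ≤ n → ∀ (α : Bool) (g : G), g ∈ perA x Λ α →
      ∀ y ∈ H, g * y ∈ perA x (Γ n) α := by
    intro n hn α g hg y hy γ' hγ'
    rw [mul_assoc]
    exact hprop α g hg (y * γ') (mul_mem hy (((hchain n n₀ hn).trans le_sup_right) hγ'))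
  set S : Set G := (↑F ∩ perSet x Λ) * (H : Set G) with hSdef
  have hSH : ∀ g ∈ S, ∀ y ∈ H, g * y ∈ S := by
    intro g hg y hy
    obtain ⟨f, hf, z, hz, rfl⟩ := Set.mem_mul.mp hg
    rw [mul_assoc]
    exact Set.mul_mem_mul hf (mul_mem hz hy)
  refine ⟨n₀, fun n hn => ?_⟩
  haveI := hfi n
  haveI := (hE n).finite_quotient
  haveI := hF.finite_quotient
  have hΓH : Γ n ≤ H := (hchain n n₀ hn).trans le_sup_right
  have hSsat : ∀ g ∈ S, ∀ γ ∈ Γ n, g * γ ∈ S := fun g hg γ hγ => hSH g hg γ (hΓH hγ)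
  have hSper : S ⊆ perSet x (Γ n) := by
    intro s hs
    obtain ⟨f, hf, z, hz, rfl⟩ := Set.mem_mul.mp hs
    obtain ⟨α, hα⟩ := mem_perSet.mp hf.2
    exact mem_perSet.mpr ⟨α, hper n hn α f hα z hz⟩
  set a := (QuotientGroup.mk '' S : Set (G ⧸ H)).ncard with ha
  set bΛ := Nat.card (H ⧸ Λ.subgroupOf H) with hbΛ
  set bn := Nat.card (H ⧸ (Γ n).subgroupOf H) with hbn
  set NH := Nat.card (G ⧸ H) with hNH
  have hcardΛ : Nat.card (G ⧸ Λ) = NH * bΛ := by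
    have h0 := ncard_preimage_qmap hΛH (Set.univ)
    rwa [Set.preimage_univ, Set.ncard_univ, Set.ncard_univ] at h0
  have hcardn : Nat.card (G ⧸ Γ n) = NH * bn := by
    have h0 := ncard_preimage_qmap hΓH (Set.univ)
    rwa [Set.preimage_univ, Set.ncard_univ, Set.ncard_univ] at h0
  have hk : ((F : Set G) ∩ perSet x Λ).ncard ≤ a * bΛ := by
    rw [← ncard_preimage_qmap hΛH]
    have h1 : ((F : Set G) ∩ perSet x Λ).ncard
        = ((QuotientGroup.mk '' ((F : Set G) ∩ perSet x Λ)) : Set (G ⧸ Λ)).ncard :=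
      (Set.ncard_image_of_injOn (hF.injOn.mono Set.inter_subset_left)).symm
    rw [h1]
    apply Set.ncard_le_ncard _ (Set.toFinite _)
    rintro c ⟨f, hf, rfl⟩
    have hfS : f ∈ S := by
      have h2 := Set.mul_mem_mul hf (show (1 : G) ∈ (H : Set G) from one_mem H)
      rw [mul_one] at h2
      exact h2
    exact Set.mem_preimage.mpr ⟨f, hfS, rfl⟩
  have hperq : (QuotientGroup.mk '' S : Set (G ⧸ Γ n)).ncard = a * bn := by
    rw [← preimage_qmap_image hΓH hSH, ncard_preimage_qmap hΓH]
  have hlow : a * bn ≤ ((E n : Set G) ∩ perSet x (Γ n)).ncard := by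
    rw [← hperq, ← (hE n).ncard_inter hSsat]
    exact Set.ncard_le_ncard (Set.inter_subset_inter_right _ hSper)
      ((E n).finite_toSet.inter_of_left _)
  have hNHpos : 0 < NH := Nat.card_pos
  have hbnpos : 0 < bn := by
    rcases Nat.eq_zero_or_pos bn with h0 | h0
    · have := Nat.card_pos (α := G ⧸ Γ n); rw [hcardn, h0, mul_zero] at this; omega
    · exact h0
  have hbΛpos : 0 < bΛ := by
    rcases Nat.eq_zero_or_pos bΛ with h0 | h0
    · have := Nat.card_pos (α := G ⧸ Λ); rw [hcardΛ, h0, mul_zero] at this; omega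
    · exact h0
  rw [perDensity, perDensity, hF.card_eq, (hE n).card_eq, hcardΛ, hcardn]
  rw [div_le_div_iff₀ (by positivity) (by positivity)]
  have hk' : (((F : Set G) ∩ perSet x Λ).ncard : ℝ) ≤ (a : ℝ) * bΛ := by exact_mod_cast hk
  have hlow' : (a : ℝ) * bn ≤ (((E n : Set G) ∩ perSet x (Γ n)).ncard : ℝ) := by
    exact_mod_cast hlow
  push_cast
  nlinarith [mul_le_mul_of_nonneg_right hk' (show (0:ℝ) ≤ (NH : ℝ) * bn by positivity),
    mul_le_mul_of_nonneg_right hlow' (show (0:ℝ) ≤ (NH : ℝ) * bΛ by positivity),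
    (show (0:ℝ) ≤ (a : ℝ) by positivity)]

end Stmt7Aux

/-- For an array `x` relative to a decreasing sequence `(Γ_n)` of finite-index normal
subgroups, the densities `D(x, Γ_n)` are independent of the choice of fundamental domains,
nondecreasing in `n`, and converge to the regularity constant `𝒟(x)`. -/
theorem stmt_7 {G : Type*} [Group G] [Countable G]
    (Γ : ℕ → Subgroup G) (hdec : ∀ n, Γ (n + 1) ≤ Γ n)
    (hnorm : ∀ n, (Γ n).Normal) (hfi : ∀ n, (Γ n).FiniteIndex)
    (x : G → Bool) (hrel : ∀ g : G, ∃ n, g ∈ perSet x (Γ n))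
    (E : ℕ → Finset G) (hE : ∀ n, IsFundDom (Γ n) (E n)) :
    (∀ n, ∀ E' : Finset G, IsFundDom (Γ n) E' →
        perDensity x (Γ n) (E n) = perDensity x (Γ n) E') ∧
      Monotone (fun n => perDensity x (Γ n) (E n)) ∧
      Filter.Tendsto (fun n => perDensity x (Γ n) (E n)) Filter.atTop (nhds (regConst x)) := by
  have hfd : ∀ n, ∀ E' : Finset G, IsFundDom (Γ n) E' →
      perDensity x (Γ n) (E n) = perDensity x (Γ n) E' := by
    intro n E' hE'
    rw [perDensity_eq_quot x (hE n), perDensity_eq_quot x hE']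
  have hmono : Monotone (fun n => perDensity x (Γ n) (E n)) := by
    apply monotone_nat_of_le_succ
    intro n
    exact perDensity_mono x (hdec n) (hE n) (hE (n + 1))
  refine ⟨hfd, hmono, ?_⟩
  set T := { r : ℝ | ∃ (Λ : Subgroup G) (F : Finset G),
      Λ.FiniteIndex ∧ IsFundDom Λ F ∧ r = perDensity x Λ F } with hT
  have hregT : regConst x = sSup T := rfl
  have hmem : ∀ n, perDensity x (Γ n) (E n) ∈ T := fun n => ⟨Γ n, E n, hfi n, hE n, rfl⟩
  have hbddT : BddAbove T := by
    refine ⟨1, ?_⟩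
    rintro r ⟨Λ, F, hΛ, hF, rfl⟩
    exact perDensity_le_one x hF
  have hbddR : BddAbove (Set.range fun n => perDensity x (Γ n) (E n)) := by
    refine ⟨1, ?_⟩
    rintro r ⟨n, rfl⟩
    exact perDensity_le_one x (hE n)
  have htend := tendsto_atTop_ciSup hmono hbddR
  have heq : (⨆ n, perDensity x (Γ n) (E n)) = regConst x := by
    rw [hregT]
    apply le_antisymm
    · exact ciSup_le fun n => le_csSup hbddT (hmem n)
    · apply csSup_le ⟨_, hmem 0⟩
      rintro r ⟨Λ, F, hΛ, hF, rfl⟩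
      obtain ⟨n₀, h⟩ := eventual_le Γ hdec hnorm hfi x hrel E hE Λ hΛ F hF
      exact (h n₀ le_rfl).trans (le_ciSup hbddR n₀)
  rwa [heq] at htend
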